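/- Let S be a dense subsemigroup of ((0,∞),+). Then 0⁺(S²) ∩ K(β(S²_d)) = ∅, i.e., no ultrafilter in 0⁺(S²) lies in the smallest two-sided ideal of β(S²_d). -/
import Mathlib


open Filter Set

attribute [local instance] Ultrafilter.add Ultrafilter.addSemigroup

/-- `0⁺(Sᵛ)`: ultrafilters on `Sᵛ` (discrete) containing `((0,ε) ∩ S)ᵛ` for every `ε > 0`. -/
def zeroPlusV (S : AddSubsemigroup ℝ) (v : ℕ) : Set (Ultrafilter (Fin v → S)) :=
  {p | ∀ ε : ℝ, 0 < ε → {f : Fin v → S | ∀ i, 0 < (f i : ℝ) ∧ (f i : ℝ) < ε} ∈ p}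

/-- A (nonempty) two-sided ideal of the semigroup `βγ` of ultrafilters. -/
def IsTwoSidedIdealU (γ : Type*) [AddSemigroup γ] (I : Set (Ultrafilter γ)) : Prop :=
  I.Nonempty ∧ ∀ p ∈ I, ∀ q : Ultrafilter γ, p + q ∈ I ∧ q + p ∈ I

/-- `K(βγ)`, the smallest two-sided ideal of `βγ` (the intersection of all two-sided ideals,
which coincides with the smallest ideal since `βγ` has one). -/
def smallestIdealU (γ : Type*) [AddSemigroup γ] : Set (Ultrafilter γ) :=
  ⋂₀ {I | IsTwoSidedIdealU γ I}

/-- `0⁺(S²) ∩ K(β(S²_d)) = ∅`. -/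
theorem zeroPlus2_inter_smallestIdeal_eq_empty (S : AddSubsemigroup ℝ)
    (hpos : ∀ x ∈ S, (0:ℝ) < x)
    (hdense : ∀ a b : ℝ, 0 < a → a < b → ∃ s ∈ S, a < s ∧ s < b) :
    zeroPlusV S 2 ∩ smallestIdealU (Fin 2 → S) = ∅ := by
  ext p
  simp only [Set.mem_inter_iff, Set.mem_empty_iff_false, iff_false, not_and]
  intro hp hK
  -- The set A of tuples whose first coordinate is ≥ 1
  set A : Set (Fin 2 → S) := {f | 1 ≤ ((f 0 : ℝ))} with hA
  -- I = {q | A ∈ q} is a two-sided ideal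
  have hI : IsTwoSidedIdealU (Fin 2 → S) {q | A ∈ q} := by
    constructor
    · obtain ⟨s, hsS, hs1, _⟩ := hdense 1 2 one_pos one_lt_two
      refine ⟨pure (fun _ => ⟨s, hsS⟩), ?_⟩
      simp only [Set.mem_setOf_eq, Ultrafilter.mem_pure, hA]
      exact le_of_lt hs1
    · intro q hq r
      have key : ∀ (x y : Fin 2 → S), x ∈ A → x + y ∈ A := by
        intro x y hx
        have hy0 : (0:ℝ) < (y 0 : ℝ) := hpos _ (y 0).2
        simp only [hA, Set.mem_setOf_eq] at hx ⊢
        have : ((x + y) 0 : ℝ) = (x 0 : ℝ) + (y 0 : ℝ) := rfl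
        rw [this]; linarith
      have key' : ∀ (x y : Fin 2 → S), y ∈ A → x + y ∈ A := by
        intro x y hy
        have hx0 : (0:ℝ) < (x 0 : ℝ) := hpos _ (x 0).2
        simp only [hA, Set.mem_setOf_eq] at hy ⊢
        have : ((x + y) 0 : ℝ) = (x 0 : ℝ) + (y 0 : ℝ) := rfl
        rw [this]; linarith
      constructor
      · show A ∈ (q + r : Ultrafilter (Fin 2 → S))
        have : ∀ᶠ x in (q : Filter _), ∀ᶠ y in (r : Filter _), x + y ∈ A := by
          filter_upwards [hq] with x hx
          exact Filter.Eventually.of_forall fun y => key x y hx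
        exact (Ultrafilter.eventually_add q r (· ∈ A)).2 this
      · show A ∈ (r + q : Ultrafilter (Fin 2 → S))
        have : ∀ᶠ x in (r : Filter _), ∀ᶠ y in (q : Filter _), x + y ∈ A := by
          apply Filter.Eventually.of_forall
          intro x
          filter_upwards [hq] with y hy
          exact key' x y hy
        exact (Ultrafilter.eventually_add r q (· ∈ A)).2 this
  -- p lies in this ideal
  have hAp : A ∈ p := hK _ hI
  -- but p also contains the set of tuples with all coordinates < 1
  have hBp := hp 1 one_pos
  obtain ⟨f, hfA, hfB⟩ := Filter.nonempty_of_mem (Filter.inter_mem hAp hBp)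
  exact absurd hfA (not_le.2 (hfB 0).2)
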